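/- Let A : D ⊆ H → H be densely defined, symmetric, with A ≥ 1. Let 𝓗 be the completion of D under the inner product [u,v] = ⟨Au,v⟩. Then the identity map on D extends to a continuous injective embedding of 𝓗 into H with operator norm at most 1. -/

import Mathlib

open scoped InnerProductSpace NNReal

/-- For a densely defined symmetric `A ≥ 1`, the identity map on `D` extends to a continuous
injective embedding of the form-completion `𝓗` into `H` of norm at most `1`.  Here `𝓗` is an
abstract completion: a Hilbert space together with a linear map `ψ : D → 𝓗` with dense range
realizing the form inner product `[u,v] = ⟨Au,v⟩`. -/
theorem stmt3 {H 𝓗 : Type*} [NormedAddCommGroup H] [InnerProductSpace ℂ H] [CompleteSpace H]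
    [NormedAddCommGroup 𝓗] [InnerProductSpace ℂ 𝓗] [CompleteSpace 𝓗]
    (D : Submodule ℂ H) (hD : Dense (D : Set H)) (A : D →ₗ[ℂ] H)
    (hsym : ∀ u v : D, ⟪A u, (v : H)⟫_ℂ = ⟪(u : H), A v⟫_ℂ)
    (hbd : ∀ u : D, ‖(u : H)‖ ^ 2 ≤ (⟪A u, (u : H)⟫_ℂ).re)
    (ψ : D →ₗ[ℂ] 𝓗) (hψdense : DenseRange ψ)
    (hψ : ∀ u v : D, ⟪ψ u, ψ v⟫_ℂ = ⟪A u, (v : H)⟫_ℂ) :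
    ∃ e : 𝓗 →L[ℂ] H, (∀ u : D, e (ψ u) = (u : H)) ∧ Function.Injective e ∧ ‖e‖ ≤ 1 := by
  -- key norm inequality: ‖u‖ ≤ ‖ψ u‖
  have hkey : ∀ u : D, ‖(u : H)‖ ≤ ‖ψ u‖ := by
    intro u
    have h1 : ‖(u : H)‖ ^ 2 ≤ ‖ψ u‖ ^ 2 := by
      have h := hbd u
      rw [← hψ u u] at h
      calc ‖(u : H)‖ ^ 2 ≤ (⟪ψ u, ψ u⟫_ℂ).re := h
        _ = ‖ψ u‖ ^ 2 := inner_self_eq_norm_sq (𝕜 := ℂ) (ψ u)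
    exact (pow_le_pow_iff_left₀ (norm_nonneg _) (norm_nonneg _) two_ne_zero).mp h1
  -- ψ is injective
  have hψinj : Function.Injective ψ := by
    rw [injective_iff_map_eq_zero]
    intro u hu
    have : ‖(u : H)‖ ≤ 0 := by simpa [hu] using hkey u
    have hu0 : (u : H) = 0 := by
      have := le_antisymm this (norm_nonneg _)
      simpa using this
    exact Subtype.ext hu0
  set S : Submodule ℂ 𝓗 := LinearMap.range ψ with hS
  let eqv : D ≃ₗ[ℂ] S := LinearEquiv.ofInjective ψ hψinj
  let g : S →ₗ[ℂ] H := D.subtype ∘ₗ (eqv.symm : S →ₗ[ℂ] D)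
  have hg : ∀ y : S, ‖g y‖ ≤ 1 * ‖y‖ := by
    intro y
    have h1 : ψ (eqv.symm y) = (y : 𝓗) := by
      have := eqv.apply_symm_apply y
      exact congrArg Subtype.val this
    have : ‖((eqv.symm y : D) : H)‖ ≤ ‖(y : 𝓗)‖ := by
      simpa [h1] using hkey (eqv.symm y)
    simpa [g] using this
  let gc : S →L[ℂ] H := g.mkContinuous 1 hg
  have hdense : DenseRange (S.subtypeL : S →L[ℂ] 𝓗) := by
    have : Set.range (S.subtypeL : S →L[ℂ] 𝓗) = (S : Set 𝓗) := Subtype.range_coe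
    rw [DenseRange, this]
    have : (S : Set 𝓗) = Set.range ψ := by
      ext x; simp [hS, LinearMap.mem_range, Set.mem_range]
    rw [this]
    exact hψdense
  have hbound : ∀ y : S, ‖y‖ ≤ ((1 : ℝ≥0) : ℝ) * ‖(S.subtypeL : S →L[ℂ] 𝓗) y‖ := fun y =>
    le_of_eq (by rw [NNReal.coe_one, one_mul]; rfl)
  have huind : IsUniformInducing (S.subtypeL : S →L[ℂ] 𝓗) :=
    (ContinuousLinearMap.isUniformEmbedding_of_bound S.subtypeL hbound).isUniformInducing
  refine ⟨gc.extend S.subtypeL, ?_, ?_, ?_⟩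
  · intro u
    have hmem : ψ u ∈ S := LinearMap.mem_range_self ψ u
    have h1 : (S.subtypeL : S →L[ℂ] 𝓗) ⟨ψ u, hmem⟩ = ψ u := rfl
    have h2 : gc.extend S.subtypeL (ψ u) = gc ⟨ψ u, hmem⟩ :=
      gc.extend_eq hdense huind ⟨ψ u, hmem⟩
    rw [h2]
    show (((eqv.symm ⟨ψ u, hmem⟩ : D) : H)) = (u : H)
    have : eqv.symm ⟨ψ u, hmem⟩ = u := by
      apply eqv.injective
      rw [eqv.apply_symm_apply]
      rfl
    rw [this]
  · -- injectivity
    set e := gc.extend S.subtypeL with he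
    have hformula : ∀ (v : D) (x : 𝓗), ⟪ψ v, x⟫_ℂ = ⟪A v, e x⟫_ℂ := by
      intro v x
      have hcont1 : Continuous fun x : 𝓗 => ⟪ψ v, x⟫_ℂ := continuous_const.inner continuous_id
      have hcont2 : Continuous fun x : 𝓗 => ⟪A v, e x⟫_ℂ :=
        continuous_const.inner e.continuous
      refine hψdense.induction_on x (isClosed_eq hcont1 hcont2) ?_
      intro u
      have heu : e (ψ u) = (u : H) := by
        have hmem : ψ u ∈ S := LinearMap.mem_range_self ψ u
        have h1 : (S.subtypeL : S →L[ℂ] 𝓗) ⟨ψ u, hmem⟩ = ψ u := rfl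
        have h2 : e (ψ u) = gc ⟨ψ u, hmem⟩ :=
          gc.extend_eq hdense huind ⟨ψ u, hmem⟩
        rw [h2]
        show (((eqv.symm ⟨ψ u, hmem⟩ : D) : H)) = (u : H)
        have : eqv.symm ⟨ψ u, hmem⟩ = u := by
          apply eqv.injective
          rw [eqv.apply_symm_apply]
          rfl
        rw [this]
      rw [heu, hψ v u]
    intro x y hxy
    have hz : e (x - y) = 0 := by rw [map_sub, hxy, sub_self]
    have hzero : ∀ v : D, ⟪ψ v, x - y⟫_ℂ = 0 := by
      intro v
      rw [hformula v, hz, inner_zero_right]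
    have : x - y = 0 := by
      have hall : ∀ z : 𝓗, ⟪z, x - y⟫_ℂ = 0 := by
        intro z
        have hc : Continuous fun z : 𝓗 => ⟪z, x - y⟫_ℂ :=
          continuous_id.inner continuous_const
        exact hψdense.induction_on z (isClosed_eq hc continuous_const) hzero
      have := hall (x - y)
      exact inner_self_eq_zero.mp this
    exact sub_eq_zero.mp this
  · -- norm bound
    have h1 : ‖gc‖ ≤ 1 := g.mkContinuous_norm_le zero_le_one hg
    have h2 := gc.opNorm_extend_le (e := S.subtypeL) (h_dense := hdense) (h_e := hbound)
    calc ‖gc.extend S.subtypeL‖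
        ≤ ((1 : ℝ≥0) : ℝ) * ‖gc‖ := h2
      _ ≤ 1 := by simpa using h1
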